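/- Let b ∈ ℝ and consider the two-peakon system for positions q₁ < q₂ and amplitudes p₁, p₂ evolving by dq_j/dt = ∂H̃/∂p_j, dp_j/dt = -(b-1) ∂H̃/∂q_j, where H̃ = (1/2)(p₁² + p₂² + 2p₁p₂ e^{-(q₂-q₁)}). Then along any solution with q₁(t) < q₂(t), both H = p₁ + p₂ and the quantity W = p₁ p₂ (1 - e^{-(q₂-q₁)})^{b-1} are constant in time (have zero time derivative). -/

import Mathlib

private lemma dP (a c x : ℝ) :
    deriv (fun y : ℝ => (1 / 2) * (y ^ 2 + a ^ 2 + 2 * y * a * c)) x = x + a * c := by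
  have h : HasDerivAt (fun y : ℝ => (1 / 2) * (y ^ 2 + a ^ 2 + 2 * y * a * c)) (x + a * c) x := by
    have h1 : HasDerivAt (fun y : ℝ => y ^ 2) (2 * x) x := by simpa using hasDerivAt_pow 2 x
    have h2 : HasDerivAt (fun y : ℝ => y * (a * c)) (a * c) x := by
      simpa using (hasDerivAt_id x).mul_const (a * c)
    have h3 := ((h1.add_const (a ^ 2)).add (h2.const_mul 2)).const_mul (1 / 2)
    have hfun : (fun y : ℝ => (1 / 2) * (y ^ 2 + a ^ 2 + 2 * y * a * c)) =
        fun y : ℝ => (1 / 2) * (y ^ 2 + a ^ 2 + 2 * (y * (a * c))) := by funext y; ring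
    rw [hfun]
    exact h3.congr_deriv (by ring)
  exact h.deriv

private lemma dQ1 (P₁ P₂ Q₂ x : ℝ) :
    deriv (fun y : ℝ => (1 / 2) * (P₁ ^ 2 + P₂ ^ 2 + 2 * P₁ * P₂ * Real.exp (-(Q₂ - y)))) x
      = P₁ * P₂ * Real.exp (-(Q₂ - x)) := by
  have he : HasDerivAt (fun y : ℝ => Real.exp (-(Q₂ - y))) (Real.exp (-(Q₂ - x))) x := by
    have h0 : HasDerivAt (fun y : ℝ => -(Q₂ - y)) 1 x := by
      exact ((hasDerivAt_id x).const_sub Q₂).neg.congr_deriv (by ring)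
    simpa using h0.exp
  have h := ((he.const_mul (2 * P₁ * P₂)).const_add (P₁ ^ 2 + P₂ ^ 2)).const_mul (1 / 2)
  have h' : HasDerivAt
      (fun y : ℝ => (1 / 2) * (P₁ ^ 2 + P₂ ^ 2 + 2 * P₁ * P₂ * Real.exp (-(Q₂ - y))))
      (P₁ * P₂ * Real.exp (-(Q₂ - x))) x := by
    exact h.congr_deriv (by ring)
  exact h'.deriv

private lemma dQ2 (P₁ P₂ Q₁ x : ℝ) :
    deriv (fun y : ℝ => (1 / 2) * (P₁ ^ 2 + P₂ ^ 2 + 2 * P₁ * P₂ * Real.exp (-(y - Q₁)))) x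
      = -(P₁ * P₂ * Real.exp (-(x - Q₁))) := by
  have he : HasDerivAt (fun y : ℝ => Real.exp (-(y - Q₁))) (-Real.exp (-(x - Q₁))) x := by
    have h0 : HasDerivAt (fun y : ℝ => -(y - Q₁)) (-1) x := by
      exact ((hasDerivAt_id x).sub_const Q₁).neg.congr_deriv (by ring)
    simpa using h0.exp
  have h := ((he.const_mul (2 * P₁ * P₂)).const_add (P₁ ^ 2 + P₂ ^ 2)).const_mul (1 / 2)
  have h' : HasDerivAt
      (fun y : ℝ => (1 / 2) * (P₁ ^ 2 + P₂ ^ 2 + 2 * P₁ * P₂ * Real.exp (-(y - Q₁))))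
      (-(P₁ * P₂ * Real.exp (-(x - Q₁)))) x := by
    exact h.congr_deriv (by ring)
  exact h'.deriv

/-- The two-peakon system of the b-family conserves `H = p₁ + p₂` and
`W = p₁p₂(1 - e^{-(q₂-q₁)})^{b-1}`. -/
theorem two_peakon_first_integrals (b : ℝ)
    (H : ℝ → ℝ → ℝ → ℝ → ℝ)
    (hH : ∀ Q₁ Q₂ P₁ P₂ : ℝ, H Q₁ Q₂ P₁ P₂ =
      (1 / 2) * (P₁ ^ 2 + P₂ ^ 2 + 2 * P₁ * P₂ * Real.exp (-(Q₂ - Q₁))))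
    (q₁ q₂ p₁ p₂ : ℝ → ℝ)
    (hq₁ : Differentiable ℝ q₁) (hq₂ : Differentiable ℝ q₂)
    (hp₁ : Differentiable ℝ p₁) (hp₂ : Differentiable ℝ p₂)
    (horder : ∀ t : ℝ, q₁ t < q₂ t)
    (heq1 : ∀ t : ℝ, deriv q₁ t = deriv (fun x => H (q₁ t) (q₂ t) x (p₂ t)) (p₁ t))
    (heq2 : ∀ t : ℝ, deriv q₂ t = deriv (fun x => H (q₁ t) (q₂ t) (p₁ t) x) (p₂ t))
    (heq3 : ∀ t : ℝ, deriv p₁ t =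
      -(b - 1) * deriv (fun x => H x (q₂ t) (p₁ t) (p₂ t)) (q₁ t))
    (heq4 : ∀ t : ℝ, deriv p₂ t =
      -(b - 1) * deriv (fun x => H (q₁ t) x (p₁ t) (p₂ t)) (q₂ t)) :
    ∀ t : ℝ,
      deriv (fun τ => p₁ τ + p₂ τ) t = 0
      ∧ deriv (fun τ => p₁ τ * p₂ τ
          * (1 - Real.exp (-(q₂ τ - q₁ τ))) ^ (b - 1)) t = 0 := by
  have A1 : ∀ t, deriv q₁ t = p₁ t + p₂ t * Real.exp (-(q₂ t - q₁ t)) := by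
    intro t
    have h := heq1 t
    simp only [hH] at h
    rw [h, dP]
  have A2 : ∀ t, deriv q₂ t = p₂ t + p₁ t * Real.exp (-(q₂ t - q₁ t)) := by
    intro t
    have h := heq2 t
    simp only [hH] at h
    rw [h]
    have hfun : (fun x : ℝ => (1 / 2) * (p₁ t ^ 2 + x ^ 2
        + 2 * p₁ t * x * Real.exp (-(q₂ t - q₁ t)))) =
        fun x : ℝ => (1 / 2) * (x ^ 2 + p₁ t ^ 2 + 2 * x * p₁ t * Real.exp (-(q₂ t - q₁ t))) := by
      funext x; ring
    rw [hfun, dP]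
  have A3 : ∀ t, deriv p₁ t = -(b - 1) * (p₁ t * p₂ t * Real.exp (-(q₂ t - q₁ t))) := by
    intro t
    have h := heq3 t
    simp only [hH] at h
    rw [h, dQ1]
  have A4 : ∀ t, deriv p₂ t = (b - 1) * (p₁ t * p₂ t * Real.exp (-(q₂ t - q₁ t))) := by
    intro t
    have h := heq4 t
    simp only [hH] at h
    rw [h, dQ2]
    ring
  intro t
  have hpos : (0 : ℝ) < 1 - Real.exp (-(q₂ t - q₁ t)) := by
    have hlt : Real.exp (-(q₂ t - q₁ t)) < 1 := by
      rw [Real.exp_lt_one_iff]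
      have := horder t
      linarith
    linarith
  have hne : 1 - Real.exp (-(q₂ t - q₁ t)) ≠ 0 := ne_of_gt hpos
  constructor
  · rw [deriv_fun_add (hp₁ t) (hp₂ t), A3 t, A4 t]
    ring
  · have hE : HasDerivAt (fun τ => Real.exp (-(q₂ τ - q₁ τ)))
        (Real.exp (-(q₂ t - q₁ t)) * -(deriv q₂ t - deriv q₁ t)) t := by
      have h1 : HasDerivAt (fun τ => -(q₂ τ - q₁ τ)) (-(deriv q₂ t - deriv q₁ t)) t :=
        ((hq₂ t).hasDerivAt.sub (hq₁ t).hasDerivAt).neg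
      simpa [mul_comm] using h1.exp
    have hu : HasDerivAt (fun τ => 1 - Real.exp (-(q₂ τ - q₁ τ)))
        (-(Real.exp (-(q₂ t - q₁ t)) * -(deriv q₂ t - deriv q₁ t))) t := hE.const_sub 1
    have hr := hu.rpow_const (p := b - 1) (Or.inl hne)
    have hpp : HasDerivAt (fun τ => p₁ τ * p₂ τ)
        (deriv p₁ t * p₂ t + p₁ t * deriv p₂ t) t :=
      (hp₁ t).hasDerivAt.mul (hp₂ t).hasDerivAt
    have hW := hpp.mul hr
    rw [show deriv (fun τ => p₁ τ * p₂ τ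
          * (1 - Real.exp (-(q₂ τ - q₁ τ))) ^ (b - 1)) t = _ from hW.deriv]
    set E := Real.exp (-(q₂ t - q₁ t)) with hEdef
    have hpow : (1 - E) ^ (b - 1) = (1 - E) ^ (b - 1 - 1) * (1 - E) := by
      rw [← Real.rpow_add_one hne (b - 1 - 1)]
      ring_nf
    rw [A1 t, A2 t, A3 t, A4 t, hpow]
    ring
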